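/- Let ≈ be an equivalence relation on R = Mₙ(F), F a field, such that for all x, y, z, w ∈ R: if x ≈ z, y ≈ w and xy = 0, then zw = 0. Then for any a, b ∈ R, a ≈ b implies that a = bu = vb for some invertible matrices u, v. -/

import Mathlib

open LinearMap
theorem aux_equiv (F : Type*) [Field F] (V : Type*) [AddCommGroup V] [Module F V] [FiniteDimensional F V]
    (f g : V →ₗ[F] V) (h : ker f = ker g) : ∃ e : V ≃ₗ[F] V, f = e.toLinearMap ∘ₗ g := by
  let q := Submodule.quotEquivOfEq (ker g) (ker f) h.symm
  let e0 : range g ≃ₗ[F] range f := (g.quotKerEquivRange.symm.trans q).trans f.quotKerEquivRange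
  have he0 : ∀ x : V, (e0 ⟨g x, mem_range_self g x⟩ : V) = f x := by
    intro x
    have h1 : g.quotKerEquivRange.symm ⟨g x, mem_range_self g x⟩ = Submodule.Quotient.mk x := by
      rw [LinearEquiv.symm_apply_eq]
      exact Subtype.ext (g.quotKerEquivRange_apply_mk x).symm
    simp only [e0, LinearEquiv.trans_apply, h1]
    erw [f.quotKerEquivRange_apply_mk]
    simp
  -- complements
  obtain ⟨C, hC⟩ := Submodule.exists_isCompl (range g)
  obtain ⟨C', hC'⟩ := Submodule.exists_isCompl (range f)
  have hdim : Module.finrank F C = Module.finrank F C' := by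
    have h1 := Submodule.finrank_add_eq_of_isCompl hC
    have h2 := Submodule.finrank_add_eq_of_isCompl hC'
    have h3 : Module.finrank F (range g) = Module.finrank F (range f) := by
      exact LinearEquiv.finrank_eq e0
    omega
  let eC : C ≃ₗ[F] C' := LinearEquiv.ofFinrankEq _ _ hdim
  let e : V ≃ₗ[F] V :=
    (Submodule.prodEquivOfIsCompl _ _ hC).symm.trans
      ((LinearEquiv.prodCongr e0 eC).trans (Submodule.prodEquivOfIsCompl _ _ hC'))
  refine ⟨e, ?_⟩
  ext x
  have hsymm : (Submodule.prodEquivOfIsCompl _ _ hC).symm (g x) =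
      (⟨g x, mem_range_self g x⟩, 0) := by
    apply (Submodule.prodEquivOfIsCompl _ _ hC).injective
    rw [LinearEquiv.apply_symm_apply]; simp [Submodule.coe_prodEquivOfIsCompl']
  simp only [coe_comp, Function.comp_apply, LinearEquiv.coe_coe, e, LinearEquiv.trans_apply, hsymm]
  simp [Submodule.coe_prodEquivOfIsCompl', he0 x]

theorem aux_mat (F : Type*) [Field F] (n : ℕ) (a b : Matrix (Fin n) (Fin n) F)
    (hk : ker (Matrix.toLin' a) = ker (Matrix.toLin' b)) :
    ∃ v : Matrix (Fin n) (Fin n) F, IsUnit v ∧ a = v * b := by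
  obtain ⟨e, he⟩ := aux_equiv F (Fin n → F) (Matrix.toLin' a) (Matrix.toLin' b) hk
  refine ⟨LinearMap.toMatrix' e.toLinearMap, ⟨⟨_, LinearMap.toMatrix' e.symm.toLinearMap, ?_, ?_⟩, rfl⟩, ?_⟩
  · rw [← LinearMap.toMatrix'_comp]; simp
  · rw [← LinearMap.toMatrix'_comp]; simp
  · apply Matrix.toLin'.injective
    rw [Matrix.toLin'_mul, he, Matrix.toLin'_toMatrix']

open Matrix

/-- If `≈` is an equivalence relation on `Mₙ(F)` (`F` a finite field) such that
`x ≈ z`, `y ≈ w` and `xy = 0` imply `zw = 0`, then `a ≈ b` implies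
`a = b*u = v*b` for some invertible matrices `u, v`. -/
theorem stmt_4 (F : Type*) [Field F] [Fintype F] (n : ℕ)
    (E : Matrix (Fin n) (Fin n) F → Matrix (Fin n) (Fin n) F → Prop)
    (hE : Equivalence E)
    (h : ∀ x y z w : Matrix (Fin n) (Fin n) F,
      E x z → E y w → x * y = 0 → z * w = 0)
    (a b : Matrix (Fin n) (Fin n) F) (hab : E a b) :
    ∃ u v : Matrix (Fin n) (Fin n) F,
      IsUnit u ∧ IsUnit v ∧ a = b * u ∧ a = v * b := by
  have hr : ∀ y, a * y = 0 ↔ b * y = 0 := fun y =>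
    ⟨h a y b y hab (hE.refl y), h b y a y (hE.symm hab) (hE.refl y)⟩
  have hl : ∀ y, y * a = 0 ↔ y * b = 0 := fun y =>
    ⟨h y a y b (hE.refl y) hab, h y b y a (hE.refl y) (hE.symm hab)⟩
  -- kernels
  have hker : ker (Matrix.toLin' a) = ker (Matrix.toLin' b) := by
    ext x
    simp only [LinearMap.mem_ker, Matrix.toLin'_apply]
    have key : ∀ c : Matrix (Fin n) (Fin n) F,
        c.mulVec x = 0 ↔ c * (Matrix.of fun k (_ : Fin n) => x k) = 0 := by
      intro c
      have hc : ∀ i j, (c * (Matrix.of fun k (_ : Fin n) => x k)) i j = c.mulVec x i := by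
        intro i j
        simp [Matrix.mul_apply, Matrix.mulVec, dotProduct]
      constructor
      · intro h0; ext i j; rw [hc i j, h0]; rfl
      · intro h0; funext i
        have := congrFun (congrFun h0 i) i
        rw [hc i i] at this; exact this
    rw [key a, key b, hr]
  have hkerT : ker (Matrix.toLin' aᵀ) = ker (Matrix.toLin' bᵀ) := by
    ext x
    simp only [LinearMap.mem_ker, Matrix.toLin'_apply]
    have key : ∀ c : Matrix (Fin n) (Fin n) F,
        cᵀ.mulVec x = 0 ↔ (Matrix.of fun (_ : Fin n) k => x k) * c = 0 := by
      intro c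
      have hc : ∀ i j, ((Matrix.of fun (_ : Fin n) k => x k) * c) i j = cᵀ.mulVec x j := by
        intro i j
        simp [Matrix.mul_apply, Matrix.mulVec, dotProduct, Matrix.transpose_apply,
          mul_comm]
      constructor
      · intro h0; ext i j; rw [hc i j, h0]; rfl
      · intro h0; funext j
        have := congrFun (congrFun h0 j) j
        rw [hc j j] at this; exact this
    rw [key a, key b, hl]
  obtain ⟨v, hv, hav⟩ := aux_mat F n a b hker
  obtain ⟨w, hw, hawT⟩ := aux_mat F n aᵀ bᵀ hkerT
  refine ⟨wᵀ, v, ?_, hv, ?_, hav⟩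
  · obtain ⟨⟨w₁, w₂, h1, h2⟩, rfl⟩ := hw
    exact ⟨⟨w₁ᵀ, w₂ᵀ, by rw [← Matrix.transpose_mul, h2, Matrix.transpose_one],
      by rw [← Matrix.transpose_mul, h1, Matrix.transpose_one]⟩, rfl⟩
  · have := congrArg Matrix.transpose hawT
    simpa [Matrix.transpose_mul] using this
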